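/- Let α be a natural number, h > 0 a real parameter, and let u : [0,∞) → ℝ be twice continuously differentiable and compactly supported with u(0) = 0 and u'(0) = 0. Define the Laguerre coefficients R_m = ∫_0^∞ u(t) · (ht)^{−α/2} · l_m^α(ht) dt. Then the Laguerre coefficients of the second time derivative satisfy, for every m, ∫_0^∞ u''(t) · (ht)^{−α/2} · l_m^α(ht) dt = (h²/4) · R_m + h² · √( m! / (m+α)! ) · Σ_{k=0}^{m−1} (m−k) · √( (k+α)! / k! ) · R_k. (This is the identity by which the integral Laguerre transform replaces the second time derivative in the wave equation by a constant multiple h²/4 of R_m plus a lower-triangular combination of the previously computed coefficients, so that the same elliptic operator is inverted for all harmonics.) -/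

import Mathlib

open MeasureTheory

/-- The generalized Laguerre polynomial
`L_n^α(x) = ∑_{k=0}^{n} (−1)^k ⬝ C(n+α, n−k) ⬝ x^k / k!`. -/
noncomputable def lagPoly (α n : ℕ) (x : ℝ) : ℝ :=
  ∑ k ∈ Finset.range (n + 1),
    (-1 : ℝ) ^ k * ((n + α).choose (n - k) : ℝ) * x ^ k / (Nat.factorial k : ℝ)

/-- The orthonormal Laguerre function of degree `m` and order `α`, evaluated at `h⬝t`:
`l_m^α(ht) = √( h ⬝ m! / (m+α)! ) ⬝ (ht)^{α/2} ⬝ e^{−ht/2} ⬝ L_m^α(ht)`. -/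
noncomputable def lagFun (α : ℕ) (h : ℝ) (m : ℕ) (t : ℝ) : ℝ :=
  Real.sqrt (h * (Nat.factorial m : ℝ) / (Nat.factorial (m + α) : ℝ)) *
    (h * t) ^ ((α : ℝ) / 2) * Real.exp (-(h * t) / 2) * lagPoly α m (h * t)

lemma choose_hockey (α n k : ℕ) (hk : k < n) :
    ∑ j ∈ Finset.Ico k n, (j + α).choose (j - k) = (n + α).choose (n - 1 - k) := by
  have h1 : ∀ j ∈ Finset.Ico k n, (j + α).choose (j - k) = (j + α).choose (k + α) := by
    intro j hj
    rw [Finset.mem_Ico] at hj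
    have e : j - k = (j + α) - (k + α) := by omega
    rw [e, Nat.choose_symm (by omega)]
  rw [Finset.sum_congr rfl h1]
  have h2 : ∑ j ∈ Finset.Ico k n, (j + α).choose (k + α)
      = ∑ i ∈ Finset.Ico (k + α) (n + α), i.choose (k + α) := by
    rw [Finset.sum_Ico_eq_sum_range, Finset.sum_Ico_eq_sum_range]
    have : n + α - (k + α) = n - k := by omega
    rw [this]
    exact Finset.sum_congr rfl fun i _ => by ring_nf
  rw [h2]
  have h3 : n + α = n + α - 1 + 1 := by omega
  rw [h3, Finset.Ico_add_one_right_eq_Icc, Nat.sum_Icc_choose, ← h3]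
  rw [show n - 1 - k = (n + α) - (k + α + 1) by omega, Nat.choose_symm (by omega)]

lemma hasDerivAt_lagPoly (α n : ℕ) (x : ℝ) :
    HasDerivAt (lagPoly α n) (-(∑ j ∈ Finset.range n, lagPoly α j x)) x := by
  have H : ∀ k ∈ Finset.range (n+1), HasDerivAt
      (fun y : ℝ => (-1 : ℝ) ^ k * ((n + α).choose (n - k) : ℝ) * y ^ k / (Nat.factorial k : ℝ))
      ((-1 : ℝ) ^ k * ((n + α).choose (n - k) : ℝ) * (k * x ^ (k-1)) / (Nat.factorial k : ℝ)) x := by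
    intro k _
    exact (((hasDerivAt_pow k x).const_mul _).div_const _)
  have hd := HasDerivAt.fun_sum H
  convert hd using 1 <;> try rfl
  rw [Finset.sum_range_succ']
  simp only [Nat.cast_zero, zero_mul, mul_zero, zero_div, add_zero]
  -- RHS of goal now: ∑ k ∈ range n, (-1)^(k+1) * C(n+α, n-(k+1)) * ((k+1) * x^(k+1-1)) / (k+1)!
  have swap : (∑ j ∈ Finset.range n, lagPoly α j x)
      = ∑ k ∈ Finset.range n, (-1:ℝ)^k * ((n + α).choose (n - 1 - k) : ℝ) * x ^ k / (Nat.factorial k : ℝ) := by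
    unfold lagPoly
    have : ∀ j, Finset.range (j+1) = Finset.Ico 0 (j+1) := fun j => by
      rw [Finset.range_eq_Ico]
    calc (∑ j ∈ Finset.range n, ∑ k ∈ Finset.range (j + 1),
            (-1:ℝ)^k * ((j + α).choose (j - k) : ℝ) * x ^ k / (Nat.factorial k : ℝ))
        = ∑ j ∈ Finset.Ico 0 n, ∑ k ∈ Finset.Ico 0 (j + 1),
            (-1:ℝ)^k * ((j + α).choose (j - k) : ℝ) * x ^ k / (Nat.factorial k : ℝ) := by
          simp only [Finset.range_eq_Ico]
      _ = ∑ k ∈ Finset.Ico 0 n, ∑ j ∈ Finset.Ico k n,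
            (-1:ℝ)^k * ((j + α).choose (j - k) : ℝ) * x ^ k / (Nat.factorial k : ℝ) :=
          (Finset.sum_Ico_Ico_comm 0 n fun k j =>
            (-1:ℝ)^k * ((j + α).choose (j - k) : ℝ) * x ^ k / (Nat.factorial k : ℝ)).symm
      _ = ∑ k ∈ Finset.range n, (-1:ℝ)^k * ((n + α).choose (n - 1 - k) : ℝ) * x ^ k / (Nat.factorial k : ℝ) := by
          rw [← Finset.range_eq_Ico]
          refine Finset.sum_congr rfl fun k hk => ?_
          rw [Finset.mem_range] at hk
          have : ∑ j ∈ Finset.Ico k n, (-1:ℝ)^k * ((j + α).choose (j - k) : ℝ) * x ^ k / (Nat.factorial k : ℝ)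
              = ((-1:ℝ)^k * x ^ k / (Nat.factorial k : ℝ)) * ∑ j ∈ Finset.Ico k n, ((j + α).choose (j - k) : ℝ) := by
            rw [Finset.mul_sum]
            exact Finset.sum_congr rfl fun j _ => by ring
          rw [this, ← Nat.cast_sum, choose_hockey α n k hk]
          ring
  rw [swap, ← Finset.sum_neg_distrib]
  refine Finset.sum_congr rfl fun k hk => ?_
  have hfac : (Nat.factorial (k+1) : ℝ) = (k+1) * (Nat.factorial k : ℝ) := by
    push_cast [Nat.factorial_succ]; ring
  have hnk : n - (k + 1) = n - 1 - k := by omega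
  rw [hnk, pow_succ, hfac]
  have h1 : (Nat.factorial k : ℝ) ≠ 0 := Nat.cast_ne_zero.mpr (Nat.factorial_ne_zero k)
  have h2 : ((k:ℝ)+1) ≠ 0 := by positivity
  have : ((k+1 : ℕ) : ℝ) = (k:ℝ)+1 := by push_cast; ring
  rw [this]
  field_simp
  simp only [Nat.add_sub_cancel]

noncomputable def lagF (α m : ℕ) (x : ℝ) : ℝ := Real.exp (-x/2) * lagPoly α m x

lemma continuous_lagPoly (α m : ℕ) : Continuous (lagPoly α m) := by
  unfold lagPoly
  exact continuous_finset_sum _ fun k _ => Continuous.div_const (by continuity) _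

lemma continuous_lagF (α m : ℕ) : Continuous (lagF α m) := by
  unfold lagF
  exact ((Real.continuous_exp.comp (by continuity)).mul (continuous_lagPoly α m))

lemma hasDerivAt_lagF (α m : ℕ) (x : ℝ) :
    HasDerivAt (lagF α m)
      (-(1/2) * lagF α m x - ∑ j ∈ Finset.range m, lagF α j x) x := by
  have he : HasDerivAt (fun y : ℝ => Real.exp (-y/2)) (Real.exp (-x/2) * (-1/2)) x :=
    HasDerivAt.exp ((hasDerivAt_id x).neg.div_const 2)
  have := he.mul (hasDerivAt_lagPoly α m x)
  convert this using 1 <;> try rfl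
  unfold lagF
  rw [mul_neg, Finset.mul_sum]
  ring

lemma tri_sum (m : ℕ) (F : ℕ → ℝ) :
    ∑ j ∈ Finset.range m, ∑ k ∈ Finset.range j, F k
      = ∑ k ∈ Finset.range m, ((m - 1 - k : ℕ) : ℝ) * F k := by
  induction m with
  | zero => simp
  | succ n ih =>
      rw [Finset.sum_range_succ, ih]
      have : ∑ k ∈ Finset.range (n+1), ((n + 1 - 1 - k : ℕ) : ℝ) * F k
          = (∑ k ∈ Finset.range n, ((n - k : ℕ) : ℝ) * F k) := by
        rw [Finset.sum_range_succ]
        simp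
      rw [this, ← Finset.sum_add_distrib]
      refine Finset.sum_congr rfl fun k hk => ?_
      rw [Finset.mem_range] at hk
      have : ((n - k : ℕ) : ℝ) = ((n - 1 - k : ℕ) : ℝ) + 1 := by
        have : n - k = (n - 1 - k) + 1 := by omega
        rw [this]; push_cast; ring
      rw [this]; ring

lemma hasDerivAt_lagF' (α m : ℕ) (x : ℝ) :
    HasDerivAt (fun y => -(1/2) * lagF α m y - ∑ j ∈ Finset.range m, lagF α j y)
      (1/4 * lagF α m x + ∑ k ∈ Finset.range m, ((m:ℝ) - (k:ℝ)) * lagF α k x) x := by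
  have h1 := (hasDerivAt_lagF α m x).const_mul (-(1/2) : ℝ)
  have h2 : HasDerivAt (fun y : ℝ => ∑ j ∈ Finset.range m, lagF α j y)
      (∑ j ∈ Finset.range m, (-(1/2) * lagF α j x - ∑ k ∈ Finset.range j, lagF α k x)) x :=
    HasDerivAt.fun_sum fun j _ => hasDerivAt_lagF α j x
  convert h1.sub h2 using 1 <;> try rfl
  rw [Finset.sum_sub_distrib, tri_sum]
  have hcongr : ∑ k ∈ Finset.range m, ((m:ℝ) - (k:ℝ)) * lagF α k x
      = ∑ k ∈ Finset.range m, (((m - 1 - k : ℕ) : ℝ) * lagF α k x + lagF α k x) := by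
    refine Finset.sum_congr rfl fun k hk => ?_
    rw [Finset.mem_range] at hk
    have h' : ((m - 1 - k : ℕ) : ℝ) = (m:ℝ) - (k:ℝ) - 1 := by
      rw [show m - 1 - k = m - (k+1) by omega, Nat.cast_sub (by omega)]
      push_cast; ring
    rw [h']; ring
  rw [hcongr, Finset.sum_add_distrib, ← Finset.mul_sum]
  ring

noncomputable def lagC (α : ℕ) (h : ℝ) (k : ℕ) : ℝ :=
  Real.sqrt (h * (Nat.factorial k : ℝ) / (Nat.factorial (k + α) : ℝ))

/-- Laguerre transform of the second time derivative: if `u` is twice continuously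
differentiable, compactly supported, with `u(0) = 0` and `u'(0) = 0`, and
`R_m = ∫_0^∞ u(t) ⬝ (ht)^{−α/2} ⬝ l_m^α(ht) dt`, then
`∫_0^∞ u''(t) ⬝ (ht)^{−α/2} ⬝ l_m^α(ht) dt
  = (h²/4) R_m + h² √(m!/(m+α)!) ∑_{k=0}^{m−1} (m−k) √((k+α)!/k!) R_k`. -/
theorem laguerre_transform_second_deriv (α : ℕ) (h : ℝ) (hh : 0 < h)
    (u : ℝ → ℝ) (hu : ContDiff ℝ 2 u) (hsupp : HasCompactSupport u)
    (hu0 : u 0 = 0) (hu'0 : deriv u 0 = 0)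
    (R : ℕ → ℝ)
    (hR : ∀ m, R m =
      ∫ t in Set.Ioi (0 : ℝ), u t * (h * t) ^ (-(α : ℝ) / 2) * lagFun α h m t)
    (m : ℕ) :
    ∫ t in Set.Ioi (0 : ℝ),
        deriv (deriv u) t * (h * t) ^ (-(α : ℝ) / 2) * lagFun α h m t =
      h ^ 2 / 4 * R m +
        h ^ 2 * Real.sqrt ((Nat.factorial m : ℝ) / (Nat.factorial (m + α) : ℝ)) *
          ∑ k ∈ Finset.range m,
            ((m : ℝ) - (k : ℝ)) *
              Real.sqrt ((Nat.factorial (k + α) : ℝ) / (Nat.factorial k : ℝ)) * R k := by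
  -- regularity of u
  have hd1 : Differentiable ℝ u := hu.differentiable (by norm_num)
  have hu1 : ContDiff ℝ 1 (deriv u) := by
    have : ContDiff ℝ ((1:ℕ) + 1) u := by exact_mod_cast hu
    exact (contDiff_succ_iff_deriv.mp this).2.2
  have hd2 : Differentiable ℝ (deriv u) := (contDiff_one_iff_deriv.mp hu1).1
  have hcont2 : Continuous (deriv (deriv u)) := (contDiff_one_iff_deriv.mp hu1).2
  have hcont1 : Continuous (deriv u) := hd2.continuous
  have hcont0 : Continuous u := hd1.continuous
  -- a bound beyond which u, u', u'' vanish
  obtain ⟨b0, hb0⟩ := hsupp.isCompact.bddAbove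
  set b : ℝ := max b0 0 + 1 with hbdef
  have hb : 0 < b := by
    have := le_max_right b0 0; simp only [hbdef]; linarith
  have hnot : ∀ t : ℝ, b ≤ t → t ∉ tsupport u := by
    intro t ht hmem
    have h1 : t ≤ b0 := hb0 hmem
    have h2 : b0 ≤ max b0 0 := le_max_left _ _
    simp only [hbdef] at ht; linarith
  have hub : ∀ t, b ≤ t → u t = 0 := fun t ht =>
    image_eq_zero_of_notMem_tsupport (hnot t ht)
  have hu'b : ∀ t, b ≤ t → deriv u t = 0 := by
    intro t ht
    by_contra hne
    exact hnot t ht (support_deriv_subset (by simpa using hne))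
  have hu''b : ∀ t, b ≤ t → deriv (deriv u) t = 0 := by
    intro t ht
    by_contra hne
    have h1 : t ∈ tsupport (deriv u) := support_deriv_subset (by simpa using hne)
    have h2 : tsupport (deriv u) ⊆ tsupport u :=
      closure_minimal (support_deriv_subset) isClosed_closure
    exact hnot t ht (h2 h1)
  -- shorthand
  set c : ℕ → ℝ := lagC α h with hcdef
  have hL : ∀ j : ℕ, Continuous fun t : ℝ => lagF α j (h*t) :=
    fun j => (continuous_lagF α j).comp (continuous_const.mul continuous_id)
  set G : ℕ → ℝ → ℝ := fun k t => c k * lagF α k (h*t) with hGdef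
  set G1 : ℕ → ℝ → ℝ := fun k t =>
    c k * ((-(1/2) * lagF α k (h*t) - ∑ j ∈ Finset.range k, lagF α j (h*t)) * h) with hG1def
  set G2 : ℕ → ℝ → ℝ := fun k t =>
    c k * ((1/4 * lagF α k (h*t) + ∑ j ∈ Finset.range k, ((k:ℝ)-(j:ℝ)) * lagF α j (h*t)) * h * h)
    with hG2def
  have hht : ∀ t : ℝ, HasDerivAt (fun s : ℝ => h * s) h t := fun t => by
    simpa using (hasDerivAt_id t).const_mul h
  have hGd : ∀ k t, HasDerivAt (G k) (G1 k t) t := fun k t =>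
    ((hasDerivAt_lagF α k (h*t)).comp t (hht t)).const_mul (c k)
  have hG1d : ∀ k t, HasDerivAt (G1 k) (G2 k t) t := fun k t => by
    have := (((hasDerivAt_lagF' α k (h*t)).comp t (hht t)).mul_const h).const_mul (c k)
    exact this
  have hGc : ∀ k, Continuous (G k) := fun k => continuous_const.mul (hL k)
  have hG1c : ∀ k, Continuous (G1 k) := fun k =>
    continuous_const.mul
      ((((continuous_const.mul (hL k)).sub
        (continuous_finset_sum _ fun j _ => hL j)).mul continuous_const))
  have hG2c : ∀ k, Continuous (G2 k) := fun k =>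
    continuous_const.mul
      (((((continuous_const.mul (hL k)).add
        (continuous_finset_sum _ fun j _ => continuous_const.mul (hL j))).mul
          continuous_const).mul continuous_const))
  -- key pointwise identity on Ioi 0
  have key : ∀ (v : ℝ → ℝ) (k : ℕ), Set.EqOn
      (fun t => v t * (h*t) ^ (-(α:ℝ)/2) * lagFun α h k t)
      (fun t => v t * G k t) (Set.Ioi (0:ℝ)) := by
    intro v k t ht
    have hx : (0:ℝ) < h * t := mul_pos hh ht
    have h1 : (h*t) ^ (-(α:ℝ)/2) * (h*t) ^ ((α:ℝ)/2) = 1 := by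
      rw [← Real.rpow_add hx, show -(α:ℝ)/2 + (α:ℝ)/2 = 0 by ring, Real.rpow_zero]
    simp only [lagFun, hGdef, hcdef, lagC, lagF]
    calc v t * (h*t) ^ (-(α:ℝ)/2) *
          (Real.sqrt (h * (Nat.factorial k : ℝ) / (Nat.factorial (k + α) : ℝ)) *
            (h * t) ^ ((α : ℝ) / 2) * Real.exp (-(h * t) / 2) * lagPoly α k (h * t))
        = ((h*t) ^ (-(α:ℝ)/2) * (h*t) ^ ((α:ℝ)/2)) *
            (v t * (Real.sqrt (h * (Nat.factorial k : ℝ) / (Nat.factorial (k + α) : ℝ)) *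
              (Real.exp (-(h * t) / 2) * lagPoly α k (h * t)))) := by ring
      _ = v t * (Real.sqrt (h * (Nat.factorial k : ℝ) / (Nat.factorial (k + α) : ℝ)) *
              (Real.exp (-(h * t) / 2) * lagPoly α k (h * t))) := by rw [h1, one_mul]
  -- cutting Ioi integrals at b
  have cut : ∀ f : ℝ → ℝ, Continuous f → (∀ t, b ≤ t → f t = 0) →
      ∫ t in Set.Ioi (0:ℝ), f t = ∫ x in (0:ℝ)..b, f x := by
    intro f hf h0
    rw [intervalIntegral.integral_of_le hb.le]
    rw [← Set.Ioc_union_Ioi_eq_Ioi hb.le,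
      setIntegral_union (Set.Ioc_disjoint_Ioi le_rfl) measurableSet_Ioi
        (hf.integrableOn_Ioc)
        ((integrableOn_congr_fun (fun t ht => h0 t (le_of_lt ht)) measurableSet_Ioi).mpr
          (integrableOn_zero))]
    rw [setIntegral_congr_fun measurableSet_Ioi (fun t ht => h0 t (le_of_lt ht))]
    simp
  -- integrability
  have hkint : ∀ k : ℕ, Integrable (fun t => u t * lagF α k (h*t)) :=
    fun k => (hcont0.mul (hL k)).integrable_of_hasCompactSupport (hsupp.mul_right)
  set J : ℕ → ℝ := fun k => ∫ t in Set.Ioi (0:ℝ), u t * lagF α k (h*t) with hJdef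
  have hRk : ∀ k, R k = c k * J k := by
    intro k
    rw [hR k, setIntegral_congr_fun measurableSet_Ioi (key u k)]
    have : (fun t => u t * G k t) = fun t => c k * (u t * lagF α k (h*t)) := by
      funext t; simp only [hGdef]; ring
    rw [this, integral_const_mul]
  -- the chain of integral identities
  have chain : ∫ t in Set.Ioi (0:ℝ),
      deriv (deriv u) t * (h*t) ^ (-(α:ℝ)/2) * lagFun α h m t
      = ∫ t in Set.Ioi (0:ℝ), u t * G2 m t := by
    rw [setIntegral_congr_fun measurableSet_Ioi (key (deriv (deriv u)) m)]
    rw [cut (fun t => deriv (deriv u) t * G m t) (hcont2.mul (hGc m))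
      (fun t ht => by show deriv (deriv u) t * G m t = 0; rw [hu''b t ht, zero_mul])]
    rw [cut (fun t => u t * G2 m t) (hcont0.mul (hG2c m))
      (fun t ht => by show u t * G2 m t = 0; rw [hub t ht, zero_mul])]
    have flip1 : ∫ x in (0:ℝ)..b, deriv (deriv u) x * G m x
        = ∫ x in (0:ℝ)..b, G m x * deriv (deriv u) x :=
      intervalIntegral.integral_congr fun x _ => mul_comm _ _
    have parts1 : ∫ x in (0:ℝ)..b, G m x * deriv (deriv u) x
        = G m b * deriv u b - G m 0 * deriv u 0 - ∫ x in (0:ℝ)..b, G1 m x * deriv u x :=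
      intervalIntegral.integral_mul_deriv_eq_deriv_mul
        (fun x _ => hGd m x) (fun x _ => (hd2 x).hasDerivAt)
        ((hG1c m).intervalIntegrable _ _) (hcont2.intervalIntegrable _ _)
    have parts2 : ∫ x in (0:ℝ)..b, G1 m x * deriv u x
        = G1 m b * u b - G1 m 0 * u 0 - ∫ x in (0:ℝ)..b, G2 m x * u x :=
      intervalIntegral.integral_mul_deriv_eq_deriv_mul
        (fun x _ => hG1d m x) (fun x _ => (hd1 x).hasDerivAt)
        ((hG2c m).intervalIntegrable _ _) (hcont1.intervalIntegrable _ _)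
    have flip2 : ∫ x in (0:ℝ)..b, G2 m x * u x = ∫ x in (0:ℝ)..b, u x * G2 m x :=
      intervalIntegral.integral_congr fun x _ => mul_comm _ _
    rw [flip1, parts1, parts2, hu'b b le_rfl, hu'0, hub b le_rfl, hu0, flip2]
    ring
  rw [chain]
  -- expand G2 and integrate term by term
  have expand : ∀ t, u t * G2 m t
      = (c m * h * h) * ((1/4) * (u t * lagF α m (h*t))
          + ∑ j ∈ Finset.range m, ((m:ℝ)-(j:ℝ)) * (u t * lagF α j (h*t))) := by
    intro t
    have e1 : (∑ j ∈ Finset.range m, ((m:ℝ)-(j:ℝ)) * (u t * lagF α j (h*t)))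
        = u t * ∑ j ∈ Finset.range m, ((m:ℝ)-(j:ℝ)) * lagF α j (h*t) := by
      rw [Finset.mul_sum]; exact Finset.sum_congr rfl fun j _ => by ring
    rw [e1]; simp only [hG2def]; ring
  have hI : ∫ t in Set.Ioi (0:ℝ), u t * G2 m t
      = (c m * h * h) * ((1/4) * J m
          + ∑ j ∈ Finset.range m, ((m:ℝ)-(j:ℝ)) * J j) := by
    rw [setIntegral_congr_fun measurableSet_Ioi (fun t _ => expand t)]
    rw [integral_const_mul, integral_add (((hkint m).const_mul _).integrableOn)
      ((integrable_finset_sum _ fun j _ => ((hkint j).const_mul _)).integrableOn),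
      integral_const_mul, integral_finset_sum _ fun j _ => ((hkint j).const_mul _).integrableOn]
    simp only [integral_const_mul, hJdef]
  rw [hI]
  -- final algebra with the square roots
  have hfac : ∀ n : ℕ, (0:ℝ) < (Nat.factorial n : ℝ) :=
    fun n => by exact_mod_cast Nat.factorial_pos n
  have csim : ∀ k : ℕ, Real.sqrt ((Nat.factorial m : ℝ) / (Nat.factorial (m + α) : ℝ))
      * (Real.sqrt ((Nat.factorial (k + α) : ℝ) / (Nat.factorial k : ℝ)) * c k) = c m := by
    intro k
    simp only [hcdef, lagC]
    rw [← Real.sqrt_mul (by positivity), ← Real.sqrt_mul (by positivity)]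
    congr 1
    have h1 := (hfac k).ne'
    have h2 := (hfac (k+α)).ne'
    have h3 := (hfac (m+α)).ne'
    field_simp
  have e2 : Real.sqrt ((Nat.factorial m : ℝ) / (Nat.factorial (m + α) : ℝ)) *
      ∑ k ∈ Finset.range m, ((m:ℝ)-(k:ℝ)) *
        Real.sqrt ((Nat.factorial (k + α) : ℝ) / (Nat.factorial k : ℝ)) * R k
      = c m * ∑ k ∈ Finset.range m, ((m:ℝ)-(k:ℝ)) * J k := by
    rw [Finset.mul_sum, Finset.mul_sum]
    refine Finset.sum_congr rfl fun k hk => ?_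
    rw [hRk k, ← csim k]
    ring
  rw [hRk m]
  rw [mul_assoc (h^2), e2]
  ring
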